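/- For a field k of characteristic p ≥ 5 and s ∈ k with s ≠ 0, 1 and α ∈ k, define ℓi₂^(p)([s + αt]) := (α^p/(s^p(1-s)^p))·£₁(s) where £₁(s) = ∑_{1≤i≤p-1} s^i/i. Then ℓi₂^(p) = ℓ^(p) ∘ δ in the following sense: for any lift s̃ = s + αt + βt² + ⋯ ∈ k[t]/(t^p) of s + αt with s̃(0) = s, one has ℓ^(p)((1 − s̃) ∧ s̃) = (α^p/(s^p(1-s)^p))·£₁(s), where ℓ^(p) = (1/2)∑_{1≤i<p} i·ℓ_{p-i}∧ℓ_i on Λ²(k[t]/(t^p))^×. In particular the value is independent of the choice of lift beyond the t¹-coefficient. -/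

import Mathlib

open Finset PowerSeries

variable (p : ℕ) {k : Type*} [Field k]

/-- Truncated logarithm `log(1+z) = ∑_{1 ≤ n < p} (-1)^{n+1} z^n / n`. -/
noncomputable def tlog (z : PowerSeries k) : PowerSeries k :=
  ∑ n ∈ Finset.Ico 1 p, ((-1 : k) ^ (n + 1) * (n : k)⁻¹) • z ^ n

/-- `ℓ_i(u)`: the `t^i`-coefficient of `log(u/u(0))`. -/
noncomputable def ell (i : ℕ) (u : PowerSeries k) : k :=
  PowerSeries.coeff (R := k) i
    (tlog p (PowerSeries.C (R := k) (PowerSeries.constantCoeff (R := k) u)⁻¹ * u - 1))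

/-- `ℓ^(p)(u ∧ v) = (1/2)∑_{1≤i<p} i·(ℓ_{p-i}(u)ℓ_i(v) − ℓ_{p-i}(v)ℓ_i(u))`. -/
noncomputable def ellp (u v : PowerSeries k) : k :=
  (2 : k)⁻¹ * ∑ i ∈ Finset.Ico 1 p,
    (i : k) * (ell p (p - i) u * ell p i v - ell p (p - i) v * ell p i u)

/-- Truncated exponential `ē^z = ∑_{0 ≤ n < p} z^n / n!`. -/
noncomputable def ee (z : PowerSeries k) : PowerSeries k :=
  ∑ n ∈ Finset.range p, ((n.factorial : k)⁻¹) • z ^ n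

/-- The Kontsevich 1½-logarithm `£₁(s) = ∑_{i=1}^{p-1} s^i / i`. -/
noncomputable def kontsevichLog (s : k) : k :=
  ∑ i ∈ Finset.Icc 1 (p - 1), (i : k)⁻¹ * s ^ i

def pq (p m : ℕ) : ℕ := p.choose m / p

lemma pq_spec {p m : ℕ} (hp : p.Prime) (hm : m ≠ 0) (hmp : m < p) :
    p * pq p m = p.choose m :=
  Nat.mul_div_cancel' (Nat.Prime.dvd_choose_self hp hm hmp)

lemma cast_choose_pred {p : ℕ} {k : Type*} [Field k] (hp : p.Prime) [CharP k p] :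
    ∀ m : ℕ, m < p → (((p - 1).choose m : ℕ) : k) = (-1) ^ m := by
  intro m
  induction m with
  | zero => simp
  | succ n ih =>
    intro hn
    have hp1 : 1 ≤ p := hp.one_lt.le.trans' (by norm_num)
    have h1 : (p - 1).choose (n + 1) * (n + 1) = (p - 1).choose n * (p - 1 - n) :=
      Nat.choose_succ_right_eq _ _
    have h2 : (((p - 1).choose (n + 1) : ℕ) : k) * ((n + 1 : ℕ) : k)
        = (((p - 1).choose n : ℕ) : k) * ((p - 1 - n : ℕ) : k) := by
      exact_mod_cast congrArg (Nat.cast : ℕ → k) h1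
    have hc : ((p - 1 - n : ℕ) : k) = -((n + 1 : ℕ) : k) := by
      have he : ((p - 1 - n) + (n + 1) : ℕ) = p := by omega
      have := congrArg (Nat.cast : ℕ → k) he
      push_cast at this
      have hp0 : ((p : ℕ) : k) = 0 := CharP.cast_eq_zero k p
      push_cast
      linear_combination this + hp0
    have hne : ((n + 1 : ℕ) : k) ≠ 0 := by
      rw [Ne, CharP.cast_eq_zero_iff k p]
      intro h
      have := Nat.le_of_dvd (by omega) h
      omega
    have := ih (by omega)
    rw [this, hc] at h2
    have h3 : (((p - 1).choose (n + 1) : ℕ) : k) * ((n + 1 : ℕ) : k)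
        = (-(-1) ^ n) * ((n + 1 : ℕ) : k) := by
      push_cast at h2 ⊢
      linear_combination h2
    have := mul_right_cancel₀ hne h3
    rw [this, pow_succ]
    ring

lemma cast_pq {p : ℕ} {k : Type*} [Field k] (hp : p.Prime) [CharP k p] {m : ℕ}
    (h1 : 1 ≤ m) (hmp : m < p) :
    ((pq p m : ℕ) : k) = (-1) ^ (m + 1) * ((m : ℕ) : k)⁻¹ := by
  have hq : pq p m * m = (p - 1).choose (m - 1) := by
    have h := Nat.add_one_mul_choose_eq (p - 1) (m - 1)
    rw [Nat.sub_add_cancel hp.one_lt.le, Nat.sub_add_cancel h1] at h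
    have h' : p * ((p - 1).choose (m - 1)) = p * (pq p m * m) := by
      rw [h, ← pq_spec hp (by omega) hmp]; ring
    exact (Nat.eq_of_mul_eq_mul_left hp.pos h').symm
  have hcast : ((pq p m : ℕ) : k) * ((m : ℕ) : k) = (-1) ^ (m - 1) := by
    rw [← cast_choose_pred hp (m - 1) (by omega), ← hq]
    push_cast
    ring
  have hmne : ((m : ℕ) : k) ≠ 0 := by
    rw [Ne, CharP.cast_eq_zero_iff k p]
    intro h; have := Nat.le_of_dvd (by omega) h; omega
  have hpow : ((-1 : k)) ^ (m - 1) = (-1) ^ (m + 1) := by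
    have : m + 1 = (m - 1) + 2 := by omega
    rw [this, pow_add]; ring
  field_simp
  rw [hcast, hpow]

lemma pq_sum_ring {R : Type*} [CommRing R] {p : ℕ} (hp : p.Prime) (x y : R) :
    (p : R) * ∑ m ∈ Ico 1 p, (pq p m : R) * x ^ m * y ^ (p - m) =
      (x + y) ^ p - x ^ p - y ^ p := by
  have hadd := add_pow x y p
  rw [Finset.range_eq_Ico, Finset.sum_eq_sum_Ico_succ_bot (a := 0) (b := p + 1) (by omega),
    Finset.sum_Ico_succ_top (a := 1) (b := p) hp.one_lt.le] at hadd
  simp only [pow_zero, Nat.sub_zero, Nat.choose_zero_right, Nat.choose_self,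
    Nat.sub_self, Nat.cast_one, one_mul, mul_one] at hadd
  rw [Finset.mul_sum]
  have : ∀ m ∈ Ico 1 p, (p : R) * ((pq p m : R) * x ^ m * y ^ (p - m))
      = x ^ m * y ^ (p - m) * (p.choose m : R) := by
    intro m hm
    simp only [mem_Ico] at hm
    rw [← pq_spec hp (by omega) hm.2]
    push_cast
    ring
  rw [Finset.sum_congr rfl this]
  linear_combination -hadd

lemma pq_sum_eq_kont {p : ℕ} {k : Type*} [Field k] (hp : p.Prime) (hp5 : 5 ≤ p) [CharP k p]
    (s : k) :
    ∑ m ∈ Ico 1 p, (pq p m : k) * s ^ m * (1 - s) ^ (p - m) = kontsevichLog p s := by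
  -- Step 1: identity in ℤ[X]
  have hodd : Odd p := hp.odd_of_ne_two (by omega)
  have hA := pq_sum_ring (R := Polynomial ℤ) hp Polynomial.X (1 - Polynomial.X)
  have hB := pq_sum_ring (R := Polynomial ℤ) hp (-Polynomial.X) 1
  have hnegpow : (-Polynomial.X : Polynomial ℤ) ^ p = -(Polynomial.X ^ p) := hodd.neg_pow _
  have hsum : (p : Polynomial ℤ) *
      ((∑ m ∈ Ico 1 p, (pq p m : Polynomial ℤ) * Polynomial.X ^ m * (1 - Polynomial.X) ^ (p - m)) +
       (∑ m ∈ Ico 1 p, (pq p m : Polynomial ℤ) * (-Polynomial.X) ^ m * (1 : Polynomial ℤ) ^ (p - m))) = 0 := by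
    rw [mul_add, hA, hB, hnegpow]
    ring
  have hpne : (p : Polynomial ℤ) ≠ 0 := by
    exact_mod_cast Nat.cast_ne_zero.mpr hp.pos.ne'
  have hzero := (mul_eq_zero.mp hsum).resolve_left hpne
  -- Step 2: push to k via aeval
  have hk := congrArg (Polynomial.aeval s : Polynomial ℤ →ₐ[ℤ] k) hzero
  simp only [map_add, map_sum, map_mul, map_pow, map_one, map_neg, Polynomial.aeval_X,
    map_sub, map_intCast, map_natCast, map_zero, Polynomial.aeval_one] at hk
  -- hk : ∑ (pq : k) * s^m * (1-s)^(p-m) + ∑ (pq : k) * (-s)^m * 1 = 0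
  have hstep : ∑ m ∈ Ico 1 p, (pq p m : k) * s ^ m * (1 - s) ^ (p - m)
      = - ∑ m ∈ Ico 1 p, (pq p m : k) * (-s) ^ m * (1 : k) ^ (p - m) := by
    linear_combination hk
  rw [hstep]
  -- Step 3: compute the RHS
  rw [← Finset.sum_neg_distrib]
  unfold kontsevichLog
  rw [show Finset.Icc 1 (p - 1) = Finset.Ico 1 p by rw [← Finset.Ico_add_one_right_eq_Icc]; congr 1; omega]
  apply Finset.sum_congr rfl
  intro m hm
  simp only [mem_Ico] at hm
  rw [cast_pq hp hm.1 hm.2, one_pow, neg_pow s m]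
  have h1 : ((-1 : k) ^ (m + 1)) * ((-1) ^ m) = -1 := by
    rw [← pow_add]
    have : m + 1 + m = 2 * m + 1 := by omega
    rw [this, pow_succ, pow_mul]
    simp
  have h2 : ((-1 : k)) ^ (m * 2) = 1 := Even.neg_one_pow ⟨m, by ring⟩
  field_simp
  linear_combination (s ^ m / (m : k)) * h1 + (2 * s ^ m / (m : k)) * h2

lemma sum_Ico_reflect' {M : Type*} [AddCommMonoid M] (f : ℕ → M) {p : ℕ} (hp : 1 ≤ p) :
    ∑ i ∈ Ico 1 p, f (p - i) = ∑ i ∈ Ico 1 p, f i := by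
  rw [Finset.sum_Ico_eq_sum_range, Finset.sum_Ico_eq_sum_range]
  conv_rhs => rw [← Finset.sum_range_reflect]
  apply Finset.sum_congr rfl
  intro j hj
  simp only [Finset.mem_range] at hj
  congr 1
  omega

lemma coeff_pred_derivative {p : ℕ} {k : Type*} [Field k] [CharP k p] (hp : 1 ≤ p)
    (h : PowerSeries k) : coeff (p - 1) (derivative k h) = 0 := by
  rw [coeff_derivative]
  have : (((p - 1 : ℕ) : k) + 1) = 0 := by
    have he : ((p - 1 : ℕ) + 1 : ℕ) = p := by omega
    have := congrArg (Nat.cast : ℕ → k) he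
    push_cast at this
    rw [this, CharP.cast_eq_zero]
  rw [this, mul_zero]

lemma key_coeff {p : ℕ} {k : Type*} [Field k] (hp : p.Prime) [CharP k p]
    {σ : PowerSeries k} (hσ : constantCoeff σ = 0) {α : k} (hα : coeff 1 σ = α)
    {m n : ℕ} (hm : 1 ≤ m) (hn : 1 ≤ n) :
    coeff (p - 1) (σ ^ m * (σ ^ (n - 1) * derivative k σ)) =
      if m + n = p then α ^ p else 0 := by
  have hcomb : σ ^ m * (σ ^ (n - 1) * derivative k σ)
      = σ ^ (m + n - 1) * derivative k σ := by
    rw [← mul_assoc, ← pow_add]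
    congr 2
    omega
  rw [hcomb]
  obtain ⟨τ, hτ⟩ : ∃ τ, σ = X * τ := X_dvd_iff.mpr hσ
  rcases lt_trichotomy (m + n) p with hlt | heq | hgt
  · rw [if_neg (by omega)]
    have hD : derivative k (σ ^ (m + n)) = (m + n) • (σ ^ (m + n - 1) * derivative k σ) := by
      rw [Derivation.leibniz_pow]
      rw [smul_eq_mul]
    have h0 : coeff (p - 1) (derivative k (σ ^ (m + n))) = 0 :=
      coeff_pred_derivative hp.one_lt.le _
    rw [hD, map_nsmul, nsmul_eq_mul] at h0
    have hne : ((m + n : ℕ) : k) ≠ 0 := by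
      rw [Ne, CharP.cast_eq_zero_iff k p]
      intro h; have := Nat.le_of_dvd (by omega) h; omega
    exact (mul_eq_zero.mp h0).resolve_left hne
  · rw [if_pos heq, hτ]
    have : (X * τ) ^ (m + n - 1) * derivative k (X * τ)
        = X ^ (m + n - 1) * (τ ^ (m + n - 1) * derivative k (X * τ)) := by
      rw [mul_pow]; ring
    rw [this]
    have hidx : p - 1 = 0 + (m + n - 1) := by omega
    rw [hidx, coeff_X_pow_mul]
    rw [coeff_zero_eq_constantCoeff, map_mul, map_pow]
    have hτ0 : constantCoeff τ = α := by
      rw [← coeff_zero_eq_constantCoeff_apply, ← hα, hτ]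
      simp
    have hD0 : constantCoeff (derivative k (X * τ)) = α := by
      rw [← coeff_zero_eq_constantCoeff_apply, coeff_derivative, ← hτ, hα]
      simp
    rw [hτ0, hD0]
    rw [← pow_succ]
    congr 1
    omega
  · rw [if_neg (by omega), hτ]
    have : (X * τ) ^ (m + n - 1) * derivative k (X * τ)
        = X ^ (m + n - 1) * (τ ^ (m + n - 1) * derivative k (X * τ)) := by
      rw [mul_pow]; ring
    rw [this, coeff_X_pow_mul']
    rw [if_neg (by omega)]

lemma master {p : ℕ} {k : Type*} [Field k] (hp : p.Prime) [CharP k p]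
    {σ : PowerSeries k} (hσ : constantCoeff σ = 0) {α : k} (hα : coeff 1 σ = α)
    (cf cg : ℕ → k) :
    ∑ i ∈ Ico 1 p, (i : k) *
      (coeff (p - i) (∑ m ∈ Ico 1 p, C (cf m) * σ ^ m) *
       coeff i (∑ n ∈ Ico 1 p, C (cg n) * σ ^ n))
    = ∑ m ∈ Ico 1 p, cf m * cg (p - m) * (((p - m : ℕ)) : k) * α ^ p := by
  set f : PowerSeries k := ∑ m ∈ Ico 1 p, C (cf m) * σ ^ m with hf
  set g : PowerSeries k := ∑ n ∈ Ico 1 p, C (cg n) * σ ^ n with hg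
  have hf0 : coeff 0 f = 0 := by
    rw [hf, map_sum]
    apply Finset.sum_eq_zero
    intro m hm
    simp only [mem_Ico] at hm
    rw [coeff_C_mul, coeff_zero_eq_constantCoeff_apply, map_pow, hσ,
      zero_pow (by omega : m ≠ 0), mul_zero]
  have hC1 : ∑ i ∈ Ico 1 p, (i : k) * (coeff (p - i) f * coeff i g)
      = coeff (p - 1) (f * derivative k g) := by
    rw [← sum_Ico_reflect' (fun i => (i : k) * (coeff (p - i) f * coeff i g))
      hp.one_lt.le]
    rw [coeff_mul, Finset.Nat.sum_antidiagonal_eq_sum_range_succ_mk]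
    have hsucc : (p - 1).succ = p := by have := hp.one_lt; omega
    rw [hsucc, Finset.range_eq_Ico,
      Finset.sum_eq_sum_Ico_succ_bot (a := 0) (b := p) hp.pos]
    rw [hf0, zero_mul, zero_add]
    apply Finset.sum_congr rfl
    intro a ha
    simp only [mem_Ico] at ha
    rw [coeff_derivative]
    have e1 : p - (p - a) = a := by omega
    have e2 : p - 1 - a + 1 = p - a := by omega
    rw [e1, e2]
    have e3 : (((p - 1 - a : ℕ) : k) + 1) = ((p - a : ℕ) : k) := by
      have he : ((p - 1 - a) + 1 : ℕ) = p - a := by omega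
      exact_mod_cast congrArg (Nat.cast : ℕ → k) he
    rw [e3]
    ring
  have hDpow : ∀ n : ℕ, derivative k (σ ^ n)
      = (n : PowerSeries k) * (σ ^ (n - 1) * derivative k σ) := by
    intro n
    rw [Derivation.leibniz_pow, smul_eq_mul, nsmul_eq_mul]
  have hDmul : ∀ (c : k) (x : PowerSeries k),
      derivative k (C c * x) = C c * derivative k x := by
    intro c x
    rw [Derivation.leibniz, derivative_C, smul_zero, add_zero, smul_eq_mul]
  have hmain : coeff (p - 1) (f * derivative k g)
      = ∑ m ∈ Ico 1 p, cf m * cg (p - m) * (((p - m : ℕ)) : k) * α ^ p := by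
    rw [hf, hg, map_sum, Finset.sum_mul_sum, map_sum]
    apply Finset.sum_congr rfl
    intro m hm
    simp only [mem_Ico] at hm
    rw [map_sum]
    have hterm : ∀ n ∈ Ico 1 p,
        coeff (p - 1) ((C (cf m) * σ ^ m) * derivative k (C (cg n) * σ ^ n))
        = cf m * cg n * ((n : ℕ) : k) * (if m + n = p then α ^ p else 0) := by
      intro n hn
      simp only [mem_Ico] at hn
      rw [hDmul, hDpow]
      have hre : (C (cf m) * σ ^ m) *
            (C (cg n) * ((n : PowerSeries k) * (σ ^ (n - 1) * derivative k σ)))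
          = C (cf m) * (C (cg n) * (C ((n : ℕ) : k) *
            (σ ^ m * (σ ^ (n - 1) * derivative k σ)))) := by
        rw [← map_natCast (C (R := k)) n]
        ring
      rw [hre, coeff_C_mul, coeff_C_mul, coeff_C_mul,
        key_coeff hp hσ hα (by omega : 1 ≤ m) (by omega : 1 ≤ n)]
      ring
    rw [Finset.sum_congr rfl hterm]
    rw [Finset.sum_eq_single (p - m)]
    · rw [if_pos (by omega)]
    · intro n hn hne
      simp only [mem_Ico] at hn
      rw [if_neg (by omega), mul_zero]
    · intro hnot
      exact absurd (by simp only [mem_Ico]; omega) hnot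
  rw [hC1, hmain]

lemma neg_one_pow_mod {k : Type*} [Field k] (a : ℕ) : (-1 : k) ^ a = (-1) ^ (a % 2) := by
  conv_lhs => rw [← Nat.div_add_mod a 2]
  rw [pow_add, pow_mul, neg_one_sq, one_pow, one_mul]

/-- `ℓi₂^(p) = ℓ^(p) ∘ δ`: for any lift `s̃ ∈ k[t]/(t^p)` of `s + αt` with
constant term `s ∉ {0,1}` and `t`-coefficient `α`, one has
`ℓ^(p)((1 − s̃) ∧ s̃) = (α^p/(s^p(1-s)^p))·£₁(s)`; in particular the value is
independent of the choice of lift beyond the `t¹`-coefficient. -/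
theorem ellp_delta_eq_li2p (hp : p.Prime) (hp5 : 5 ≤ p) [CharP k p]
    (s α : k) (hs0 : s ≠ 0) (hs1 : s ≠ 1) (st : PowerSeries k)
    (h0 : PowerSeries.constantCoeff (R := k) st = s) (h1 : PowerSeries.coeff (R := k) 1 st = α) :
    ellp p (1 - st) st = α ^ p / (s ^ p * (1 - s) ^ p) * kontsevichLog p s := by
  have hp1 : 1 ≤ p := hp.one_lt.le
  have hpodd : p % 2 = 1 := Nat.odd_iff.mp (hp.odd_of_ne_two (by omega))
  have hs1' : (1 : k) - s ≠ 0 := sub_ne_zero.mpr (Ne.symm hs1)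
  set σ : PowerSeries k := st - C s with hσdef
  have hσ0 : constantCoeff σ = 0 := by
    rw [hσdef, map_sub, h0, constantCoeff_C, sub_self]
  have hσ1 : coeff 1 σ = α := by
    rw [hσdef, map_sub, h1, coeff_C, if_neg (by omega), sub_zero]
  -- tlog of C c * σ
  have tlogC : ∀ c : k, tlog p (C c * σ)
      = ∑ n ∈ Ico 1 p, C ((-1 : k) ^ (n + 1) * (n : k)⁻¹ * c ^ n) * σ ^ n := by
    intro c
    unfold tlog
    apply Finset.sum_congr rfl
    intro n _
    rw [smul_eq_C_mul, mul_pow, ← map_pow (C (R := k)) c n, ← mul_assoc, ← map_mul]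
  -- identification of the two tlog arguments
  have hargf : C (constantCoeff (1 - st))⁻¹ * (1 - st) - 1 = C (-(1 - s)⁻¹) * σ := by
    have hcc : constantCoeff (1 - st) = 1 - s := by
      rw [map_sub, h0, map_one]
    rw [hcc, hσdef, map_neg]
    have e1 : (1 : PowerSeries k) - C s = C (1 - s) := by rw [map_sub, map_one]
    have e2 : C (1 - s)⁻¹ * C (1 - s) = 1 := by
      rw [← map_mul, inv_mul_cancel₀ hs1', map_one]
    linear_combination (C (1 - s)⁻¹) * e1 + e2
  have hargg : C (constantCoeff st)⁻¹ * st - 1 = C s⁻¹ * σ := by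
    rw [h0, hσdef]
    have e2 : C s⁻¹ * C s = 1 := by
      rw [← map_mul, inv_mul_cancel₀ hs0, map_one]
    linear_combination e2
  have hf : ∀ j, ell p j (1 - st)
      = coeff j (∑ m ∈ Ico 1 p,
          C ((-1 : k) ^ (m + 1) * (m : k)⁻¹ * (-(1 - s)⁻¹) ^ m) * σ ^ m) := by
    intro j
    unfold ell
    rw [hargf, tlogC]
  have hg : ∀ j, ell p j st
      = coeff j (∑ n ∈ Ico 1 p,
          C ((-1 : k) ^ (n + 1) * (n : k)⁻¹ * (s⁻¹) ^ n) * σ ^ n) := by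
    intro j
    unfold ell
    rw [hargg, tlogC]
  -- antisymmetry step
  have h2ne : (2 : k) ≠ 0 := by
    have h2 : ((2 : ℕ) : k) ≠ 0 := by
      rw [Ne, CharP.cast_eq_zero_iff k p]
      intro h
      have := Nat.le_of_dvd (by norm_num) h
      omega
    simpa using h2
  have hswap : ∑ i ∈ Ico 1 p, (i : k) * (ell p (p - i) st * ell p i (1 - st))
      = ∑ i ∈ Ico 1 p, -((i : k) * (ell p (p - i) (1 - st) * ell p i st)) := by
    rw [← sum_Ico_reflect' (fun i => (i : k) * (ell p (p - i) st * ell p i (1 - st))) hp1]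
    apply Finset.sum_congr rfl
    intro i hi
    simp only [mem_Ico] at hi
    have e1 : p - (p - i) = i := by omega
    have e2 : ((p - i : ℕ) : k) = -((i : ℕ) : k) := by
      have he : ((p - i) + i : ℕ) = p := by omega
      have hc := congrArg (Nat.cast : ℕ → k) he
      push_cast at hc
      have hp0 : ((p : ℕ) : k) = 0 := CharP.cast_eq_zero k p
      linear_combination hc + hp0
    rw [e1, e2]
    ring
  have hstep1 : ellp p (1 - st) st
      = ∑ i ∈ Ico 1 p, (i : k) * (ell p (p - i) (1 - st) * ell p i st) := by
    unfold ellp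
    have hsub : ∀ i ∈ Ico 1 p,
        (i : k) * (ell p (p - i) (1 - st) * ell p i st - ell p (p - i) st * ell p i (1 - st))
        = (i : k) * (ell p (p - i) (1 - st) * ell p i st)
          - (i : k) * (ell p (p - i) st * ell p i (1 - st)) := by
      intro i _
      ring
    rw [Finset.sum_congr rfl hsub, Finset.sum_sub_distrib, hswap, Finset.sum_neg_distrib]
    field_simp
    ring
  rw [hstep1]
  have hcongr : ∀ i ∈ Ico 1 p, (i : k) * (ell p (p - i) (1 - st) * ell p i st)
      = (i : k) *
        (coeff (p - i) (∑ m ∈ Ico 1 p,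
            C ((-1 : k) ^ (m + 1) * (m : k)⁻¹ * (-(1 - s)⁻¹) ^ m) * σ ^ m) *
         coeff i (∑ n ∈ Ico 1 p,
            C ((-1 : k) ^ (n + 1) * (n : k)⁻¹ * (s⁻¹) ^ n) * σ ^ n)) := by
    intro i _
    rw [hf, hg]
  rw [Finset.sum_congr rfl hcongr]
  refine (master hp hσ0 hσ1
    (fun m => (-1 : k) ^ (m + 1) * (m : k)⁻¹ * (-(1 - s)⁻¹) ^ m)
    (fun n => (-1 : k) ^ (n + 1) * (n : k)⁻¹ * (s⁻¹) ^ n)).trans ?_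
  -- final scalar computation
  rw [← pq_sum_eq_kont hp hp5 s, Finset.mul_sum]
  apply Finset.sum_congr rfl
  intro m hm
  simp only [mem_Ico] at hm
  rw [cast_pq hp hm.1 hm.2]
  set d := p - m with hd
  have hpd : p = m + d := by omega
  have hdm : ((d : ℕ) : k) = -((m : ℕ) : k) := by
    have he : (d + m : ℕ) = p := by omega
    have hc := congrArg (Nat.cast : ℕ → k) he
    push_cast at hc
    have hp0 : ((p : ℕ) : k) = 0 := CharP.cast_eq_zero k p
    linear_combination hc + hp0
  have hmne : ((m : ℕ) : k) ≠ 0 := by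
    rw [Ne, CharP.cast_eq_zero_iff k p]
    intro h
    have := Nat.le_of_dvd (by omega) h
    omega
  have hpow2 : (-1 : k) ^ (d + 1) = (-1) ^ m := by
    rw [neg_one_pow_mod (d + 1), neg_one_pow_mod m]
    congr 1
    omega
  have hA : ((-1 : k) ^ m) * ((-1) ^ m) = 1 := by
    rw [← pow_add, neg_one_pow_mod (m + m)]
    have : (m + m) % 2 = 0 := by omega
    rw [this, pow_zero]
  rw [hpow2, neg_pow, hdm, hpd, pow_add, pow_add, pow_add]
  field_simp
  rw [neg_pow (1 / (1 - s)), div_pow, div_pow, one_pow, one_pow, pow_add, pow_add]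
  field_simp
  linear_combination (-(α ^ m * α ^ d)) * hA
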